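/- Let t be a vector of length n over Z that is nonzero modulo a prime p, and let d ∈ Z/p^l Z. If x is a random vector in {a, a+1, ..., a+S-1}^n with independent uniform entries, then the probability that t·x ≡ d (mod p^l) is at most (1/S)·⌈S/p^l⌉. -/

import Mathlib

lemma count_residue (S N : ℕ) (hS : 0 < S) (hN : 0 < N) [NeZero N] (r : ZMod N) :
    (Finset.univ.filter fun v : Fin S => ((v : ℕ) : ZMod N) = r).card ≤ (S - 1) / N + 1 := by
  classical
  have h := Finset.card_le_card_of_injOn
    (s := Finset.univ.filter fun v : Fin S => ((v : ℕ) : ZMod N) = r)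
    (t := (Finset.univ : Finset (Fin ((S-1)/N + 1))))
    (fun v : Fin S => (⟨(v : ℕ) / N, by
      have : (v : ℕ) ≤ S - 1 := Nat.le_sub_one_of_lt v.2
      exact Nat.lt_succ_of_le (Nat.div_le_div_right this)⟩ : Fin ((S-1)/N + 1)))
    (fun _ _ => Finset.mem_univ _) ?_
  · simpa using h
  intro v1 h1 v2 h2 h
  simp only [Finset.mem_coe, Finset.mem_filter, Finset.mem_univ, true_and] at h1 h2
  have e1 : (v1 : ℕ) % N = r.val := by rw [← h1, ZMod.val_natCast]
  have e2 : (v2 : ℕ) % N = r.val := by rw [← h2, ZMod.val_natCast]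
  have hdiv : (v1 : ℕ) / N = (v2 : ℕ) / N := by simpa only [Fin.mk.injEq] using h
  apply Fin.ext
  rw [← Nat.div_add_mod (v1 : ℕ) N, ← Nat.div_add_mod (v2 : ℕ) N, hdiv, e1, e2]

/-- If `t` is an integer vector nonzero modulo the prime `p` and
`x` is a random vector with i.i.d. entries uniform on `{a, …, a+S-1}`, then
`P(t·x ≡ d (mod p^l)) ≤ (1/S)·⌈S/p^l⌉`. -/
theorem stmt_11 (n S : ℕ) (hS : 0 < S) (a : ℤ)
    (p : ℕ) (hp : p.Prime) (l : ℕ) (hl : 0 < l)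
    (t : Fin n → ℤ) (ht : ∃ i, ¬ ((p : ℤ) ∣ t i))
    (d : ZMod (p ^ l)) :
    ({ω : Fin n → Fin S |
        (((∑ i, t i * (a + ((ω i : ℕ) : ℤ))) : ℤ) : ZMod (p ^ l)) = d}.ncard : ℝ)
        / (S : ℝ) ^ n
      ≤ ((⌈(S : ℝ) / (p : ℝ) ^ l⌉ : ℤ) : ℝ) / S := by
  classical
  obtain ⟨i, hti⟩ := ht
  have hn1 : 1 ≤ n := i.pos
  have hN : 0 < p ^ l := pow_pos hp.pos l
  haveI : NeZero (p ^ l) := ⟨hN.ne'⟩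
  set K := (S - 1) / (p ^ l) + 1 with hKdef
  -- the unit
  have hdvd : ¬ p ∣ (t i).natAbs := fun h =>
    hti (Int.dvd_natAbs.mp (Int.natCast_dvd_natCast.mpr h))
  have hcop : Nat.Coprime (t i).natAbs (p ^ l) :=
    Nat.Coprime.pow_right l ((Nat.Prime.coprime_iff_not_dvd hp).mpr hdvd).symm
  have h1 : IsUnit (((t i).natAbs : ZMod (p ^ l))) := (ZMod.isUnit_iff_coprime _ _).mpr hcop
  have hunit : IsUnit ((t i : ZMod (p ^ l))) := by
    rcases Int.natAbs_eq (t i) with he | he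
    · rw [he, Int.cast_natCast]; exact h1
    · rw [he, Int.cast_neg, Int.cast_natCast]; exact h1.neg
  obtain ⟨u, hu⟩ := hunit
  -- the set as a finset
  set s : Finset (Fin n → Fin S) := Finset.univ.filter (fun ω : Fin n → Fin S =>
    (((∑ j, t j * (a + ((ω j : ℕ) : ℤ))) : ℤ) : ZMod (p ^ l)) = d) with hs
  have hset : {ω : Fin n → Fin S |
      (((∑ j, t j * (a + ((ω j : ℕ) : ℤ))) : ℤ) : ZMod (p ^ l)) = d} = ↑s := by
    ext ω; simp [hs]
  rw [hset, Set.ncard_coe_finset]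
  -- counting bound
  have hcard : s.card ≤ K * S ^ (n - 1) := by
    have hmain := Finset.card_le_mul_card_image
      (f := fun (ω : Fin n → Fin S) (j : {j : Fin n // j ≠ i}) => ω j.1) s K ?_
    · refine hmain.trans ?_
      have himg : (s.image fun (ω : Fin n → Fin S) (j : {j : Fin n // j ≠ i}) => ω j.1).card
          ≤ S ^ (n - 1) := by
        refine (Finset.card_le_univ _).trans ?_
        rw [Fintype.card_fun, Fintype.card_fin]
        have : Fintype.card {j : Fin n // j ≠ i} = n - 1 := by
          rw [Fintype.card_subtype_compl, Fintype.card_subtype_eq, Fintype.card_fin]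
        rw [this]
      exact Nat.mul_le_mul_left K himg
    · -- fiber bound
      intro g hg
      set C : ℤ := ∑ j ∈ Finset.univ.erase i, t j *
        (a + (((if h : j = i then 0 else (g ⟨j, h⟩ : ℕ)) : ℕ) : ℤ)) with hC
      set r : ZMod (p ^ l) := ↑u⁻¹ * (d - (C : ZMod (p ^ l))) - (a : ZMod (p ^ l)) with hr
      have hfib : ∀ ω ∈ Finset.filter
          (fun ω : Fin n → Fin S => (fun j : {j : Fin n // j ≠ i} => ω j.1) = g) s,
          (((ω i : ℕ) : ZMod (p ^ l)) = r ∧ ∀ (j) (hj : j ≠ i), ω j = g ⟨j, hj⟩) := by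
        intro ω hω
        rw [Finset.mem_filter, hs, Finset.mem_filter] at hω
        obtain ⟨⟨-, hsum⟩, hfun⟩ := hω
        have hrest : ∀ (j) (hj : j ≠ i), ω j = g ⟨j, hj⟩ := fun j hj => congrFun hfun ⟨j, hj⟩
        refine ⟨?_, hrest⟩
        have hsplit : ∑ j, t j * (a + ((ω j : ℕ) : ℤ))
            = t i * (a + ((ω i : ℕ) : ℤ)) + C := by
          rw [← Finset.add_sum_erase _ _ (Finset.mem_univ i)]
          congr 1
          refine Finset.sum_congr rfl fun j hj => ?_
          have hj' : j ≠ i := (Finset.mem_erase.mp hj).1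
          rw [hrest j hj', dif_neg hj']
        rw [hsplit] at hsum
        push_cast at hsum
        have : (↑u : ZMod (p ^ l)) * ((a : ZMod (p ^ l)) + ((ω i : ℕ) : ZMod (p ^ l))) = d - (C : ZMod (p ^ l)) := by
          rw [hu]; linear_combination hsum
        have h2 : (a : ZMod (p ^ l)) + ((ω i : ℕ) : ZMod (p ^ l)) = ↑u⁻¹ * (d - (C : ZMod (p ^ l))) := by
          rw [eq_comm, Units.inv_mul_eq_iff_eq_mul]
          linear_combination this.symm
        rw [hr]
        linear_combination h2
      have hinj := Finset.card_le_card_of_injOn (fun ω : Fin n → Fin S => ω i)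
        (t := Finset.univ.filter fun v : Fin S => ((v : ℕ) : ZMod (p ^ l)) = r)
        (fun ω hω => by
          simp only [Finset.mem_coe, Finset.mem_filter, Finset.mem_univ, true_and]
          exact (hfib ω hω).1)
        ?_
      · exact hinj.trans (count_residue S (p ^ l) hS hN r)
      · intro ω1 h1 ω2 h2 hval
        funext j
        by_cases hj : j = i
        · subst hj; exact hval
        · rw [(hfib ω1 h1).2 j hj, (hfib ω2 h2).2 j hj]
  -- ceiling bound
  have hceil : (K : ℤ) ≤ ⌈(S : ℝ) / (p : ℝ) ^ l⌉ := by
    have hlt : (((S - 1) / (p ^ l) : ℕ) : ℝ) < (S : ℝ) / (p : ℝ) ^ l := by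
      refine lt_of_le_of_lt Nat.cast_div_le ?_
      have h1' : ((S - 1 : ℕ) : ℝ) = (S : ℝ) - 1 := by
        rw [Nat.cast_sub hS, Nat.cast_one]
      rw [h1']
      push_cast
      rw [div_lt_div_iff_of_pos_right (pow_pos (by exact_mod_cast hp.pos) l)]
      linarith
    have h2 : ((((S - 1) / (p ^ l) : ℕ) : ℤ)) < ⌈(S : ℝ) / (p : ℝ) ^ l⌉ := by
      rw [Int.lt_ceil]; exact_mod_cast hlt
    rw [hKdef]; push_cast at h2 ⊢; omega
  have hceil' : (K : ℝ) ≤ ((⌈(S : ℝ) / (p : ℝ) ^ l⌉ : ℤ) : ℝ) := by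
    have := (@Int.cast_le ℝ _ _ _).mpr hceil
    rwa [Int.cast_natCast] at this
  have hcast : (s.card : ℝ) ≤ (K : ℝ) * (S : ℝ) ^ (n - 1) := by exact_mod_cast hcard
  have hSpos : (0 : ℝ) < S := by exact_mod_cast hS
  have hpow : (S : ℝ) ^ n = (S : ℝ) ^ (n - 1) * S := by
    rw [← pow_succ, Nat.sub_add_cancel hn1]
  calc (s.card : ℝ) / (S : ℝ) ^ n ≤ ((K : ℝ) * (S : ℝ) ^ (n - 1)) / (S : ℝ) ^ n := by
        gcongr
    _ = (K : ℝ) / S := by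
        rw [hpow, mul_comm (K : ℝ), mul_div_mul_left _ _ (by positivity)]
    _ ≤ _ := by gcongr
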